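/- Suppose A > A₀. Then the grand canonical Hamiltonian H_{ℝ²} has φ = 0 as its unique minimizer over H¹(ℝ²): inf{ H_{ℝ²}(φ) : φ ∈ H¹(ℝ²) } = 0, H_{ℝ²}(0) = 0, and H_{ℝ²}(φ) > 0 for every φ ∈ H¹(ℝ²) with φ ≠ 0. -/

import Mathlib

noncomputable section

open MeasureTheory

/-- The plane ℝ². -/
abbrev R2 : Type := EuclideanSpace ℝ (Fin 2)

/-- Squared L²(ℝ²) norm. -/
def L2sq (φ : R2 → ℝ) : ℝ := ∫ x : R2, (φ x) ^ 2

/-- L²(ℝ²) norm. -/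
def L2norm (φ : R2 → ℝ) : ℝ := Real.sqrt (L2sq φ)

/-- Squared L²(ℝ²) norm of the gradient. -/
def gradL2sq (φ : R2 → ℝ) : ℝ := ∫ x : R2, ‖fderiv ℝ φ x‖ ^ 2

/-- L²(ℝ²) norm of the gradient. -/
def gradL2norm (φ : R2 → ℝ) : ℝ := Real.sqrt (gradL2sq φ)

/-- Cubed L³(ℝ²) norm, i.e. ∫ |φ|³. -/
def L3cube (φ : R2 → ℝ) : ℝ := ∫ x : R2, |φ x| ^ 3

/-- Membership in H¹(ℝ²): φ and its gradient are square integrable (together with the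
L³ integrability, which holds for every H¹(ℝ²) function by Sobolev embedding). -/
structure InH1 (φ : R2 → ℝ) : Prop where
  diff : Differentiable ℝ φ
  memL2 : MemLp φ 2 volume
  gradMemL2 : MemLp (fun x => ‖fderiv ℝ φ x‖) 2 volume
  memL3 : MemLp φ 3 volume

/-- The Weinstein functional 𝓕(φ) = ‖∇φ‖_{L²}‖φ‖_{L²}²/‖φ‖_{L³}³. -/
def weinstein (φ : R2 → ℝ) : ℝ := gradL2norm φ * (L2norm φ) ^ 2 / L3cube φ

/-- The Laplacian on ℝ². -/
def lap (φ : R2 → ℝ) (x : R2) : ℝ :=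
  ∑ i : Fin 2, fderiv ℝ (fun y => fderiv ℝ φ y (EuclideanSpace.single i 1)) x
    (EuclideanSpace.single i 1)

/-- φ vanishes almost everywhere (i.e. φ = 0 as an element of H¹). -/
def aeZero (φ : R2 → ℝ) : Prop := φ =ᵐ[volume] fun _ => 0

/-- `Q` is a (nonzero) minimizer of the Weinstein functional over nonzero H¹(ℝ²) functions
that solves the elliptic equation ΔQ + 2Q² − 2Q = 0. -/
structure IsGNSOptimizer (Q : R2 → ℝ) : Prop where
  h1 : InH1 Q
  ne : ¬ aeZero Q
  isMin : ∀ φ : R2 → ℝ, InH1 φ → ¬ aeZero φ → weinstein Q ≤ weinstein φ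
  ell : ∀ x, lap Q x + 2 * (Q x) ^ 2 - 2 * Q x = 0

/-- The Hamiltonian H₀(φ) = (1/2)∫|∇φ|² + (σ/3)∫φ³ on ℝ². -/
def H0f (σ : ℝ) (φ : R2 → ℝ) : ℝ :=
  (1/2) * gradL2sq φ + (σ/3) * ∫ x : R2, (φ x) ^ 3

/-- The grand canonical Hamiltonian H_{ℝ²}(φ) = H₀(φ) + A(∫φ²)². -/
def HR2 (σ A : ℝ) (φ : R2 → ℝ) : ℝ :=
  H0f σ φ + A * (∫ x : R2, (φ x) ^ 2) ^ 2

/-- The set of values of H₀ on the unit L² sphere of H¹(ℝ²). -/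
def sphereVals (σ : ℝ) : Set ℝ :=
  {y | ∃ φ : R2 → ℝ, InH1 φ ∧ L2norm φ = 1 ∧ y = H0f σ φ}

/-- The critical chemical potential A₀ = −inf{H₀(φ) : φ ∈ H¹(ℝ²), ‖φ‖_{L²} = 1}. -/
def A0 (σ : ℝ) : ℝ := - sInf (sphereVals σ)

/-- The rescaled soliton Q_{q,x₀}(x) = q·Q(q^{1/2}(x − x₀)). -/
def solQ (Q : R2 → ℝ) (q : ℝ) (x₀ : R2) : R2 → ℝ :=
  fun x => q * Q (Real.sqrt q • (x - x₀))

lemma finrank_R2 : Module.finrank ℝ R2 = 2 := by simp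

lemma fderiv_scaled {φ : R2 → ℝ} (h : Differentiable ℝ φ) (a c : ℝ) (x : R2) :
    fderiv ℝ (fun y => a * φ (c • y)) x = (a * c) • fderiv ℝ φ (c • x) := by
  have hg : HasFDerivAt (fun y : R2 => c • y) (c • ContinuousLinearMap.id ℝ R2) x :=
    (c • ContinuousLinearMap.id ℝ R2).hasFDerivAt
  have h1 : HasFDerivAt (fun y : R2 => φ (c • y))
      ((fderiv ℝ φ (c • x)).comp (c • ContinuousLinearMap.id ℝ R2)) x :=
    (h (c • x)).hasFDerivAt.comp x hg
  have h2 := h1.const_mul a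
  rw [h2.fderiv]
  ext v
  simp [mul_assoc, smul_eq_mul]

lemma integral_comp_smul' (f : R2 → ℝ) {c : ℝ} (hc : 0 < c) :
    ∫ x : R2, f (c • x) = (c ^ 2)⁻¹ * ∫ x : R2, f x := by
  rw [Measure.integral_comp_smul volume f c, finrank_R2, smul_eq_mul,
    abs_of_nonneg (by positivity)]

lemma memLp_comp_smul {f : R2 → ℝ} {p : ENNReal} (hf : MemLp f p volume) {c : ℝ} (hc : c ≠ 0) :
    MemLp (fun x : R2 => f (c • x)) p volume := by
  have h1 : MemLp f p (Measure.map (c • ·) volume) := by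
    rw [Measure.map_addHaar_smul volume hc]
    exact hf.smul_measure ENNReal.ofReal_ne_top
  have hm : AEMeasurable (fun x : R2 => c • x) volume :=
    (measurable_const_smul c).aemeasurable
  exact (memLp_map_measure_iff h1.aestronglyMeasurable hm).mp h1

lemma inH1_scaled {φ : R2 → ℝ} (h : InH1 φ) (a : ℝ) {c : ℝ} (hc : 0 < c) :
    InH1 (fun x => a * φ (c • x)) := by
  have hdiff : Differentiable ℝ (fun x : R2 => a * φ (c • x)) :=
    (h.diff.comp (differentiable_id.const_smul c)).const_mul a
  refine ⟨hdiff, (memLp_comp_smul h.memL2 hc.ne').const_mul a, ?_,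
    (memLp_comp_smul h.memL3 hc.ne').const_mul a⟩
  have heq : (fun x : R2 => ‖fderiv ℝ (fun y => a * φ (c • y)) x‖)
      = fun x : R2 => |a * c| * ‖fderiv ℝ φ (c • x)‖ := by
    funext x
    rw [fderiv_scaled h.diff a c x, norm_smul, Real.norm_eq_abs]
  rw [heq]
  exact (memLp_comp_smul h.gradMemL2 hc.ne').const_mul _

lemma sq_integral_scaled (f : R2 → ℝ) (a : ℝ) {c : ℝ} (hc : 0 < c) :
    ∫ x : R2, (a * f (c • x)) ^ 2 = a ^ 2 * (c ^ 2)⁻¹ * ∫ x : R2, (f x) ^ 2 := by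
  simp_rw [mul_pow]
  rw [integral_const_mul, integral_comp_smul' (fun y => (f y) ^ 2) hc]
  ring

lemma cube_integral_scaled (f : R2 → ℝ) (a : ℝ) {c : ℝ} (hc : 0 < c) :
    ∫ x : R2, (a * f (c • x)) ^ 3 = a ^ 3 * (c ^ 2)⁻¹ * ∫ x : R2, (f x) ^ 3 := by
  simp_rw [mul_pow]
  rw [integral_const_mul, integral_comp_smul' (fun y => (f y) ^ 3) hc]
  ring

lemma grad_integral_scaled {φ : R2 → ℝ} (h : Differentiable ℝ φ) (a : ℝ) {c : ℝ} (hc : 0 < c) :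
    gradL2sq (fun x => a * φ (c • x)) = a ^ 2 * gradL2sq φ := by
  unfold gradL2sq
  have heq : ∀ x : R2, ‖fderiv ℝ (fun y => a * φ (c • y)) x‖ ^ 2
      = (a * c) ^ 2 * ‖fderiv ℝ φ (c • x)‖ ^ 2 := by
    intro x
    rw [fderiv_scaled h a c x, norm_smul, Real.norm_eq_abs, mul_pow, sq_abs]
  simp_rw [heq]
  rw [integral_const_mul, integral_comp_smul' (fun y => ‖fderiv ℝ φ y‖ ^ 2) hc]
  have : c ^ 2 ≠ 0 := by positivity
  field_simp

lemma L2sq_pos {φ : R2 → ℝ} (h : InH1 φ) (hz : ¬ aeZero φ) : 0 < L2sq φ := by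
  have hi : Integrable (fun x : R2 => φ x ^ 2) volume := h.memL2.integrable_sq
  have h0 : 0 ≤ L2sq φ := integral_nonneg fun x => sq_nonneg _
  rcases h0.lt_or_eq with h1 | h1
  · exact h1
  · exfalso
    apply hz
    have := (integral_eq_zero_iff_of_nonneg (fun x => sq_nonneg (φ x)) hi).mp h1.symm
    filter_upwards [this] with x hx
    simpa using pow_eq_zero_iff (n := 2) (by norm_num) |>.mp hx

lemma H0_lower {σ : ℝ} (hbdd : BddBelow (sphereVals σ)) {φ : R2 → ℝ} (h : InH1 φ)
    (hm : 0 < L2sq φ) : -(A0 σ) * (L2sq φ) ^ 2 ≤ H0f σ φ := by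
  set m := L2sq φ with hmdef
  have hms : 0 < Real.sqrt m := Real.sqrt_pos.mpr hm
  set c : ℝ := (Real.sqrt m)⁻¹ with hcdef
  have hc : 0 < c := inv_pos.mpr hms
  have hc2 : c ^ 2 = m⁻¹ := by
    rw [hcdef, inv_pow, Real.sq_sqrt hm.le]
  set a : ℝ := m⁻¹ with hadef
  set ψ : R2 → ℝ := fun x => a * φ (c • x) with hψ
  have hψ1 : InH1 ψ := inH1_scaled h a hc
  have hL2 : L2sq ψ = 1 := by
    rw [hψ]
    show (∫ x : R2, (a * φ (c • x)) ^ 2) = 1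
    rw [sq_integral_scaled φ a hc, hc2, inv_inv, hadef,
      show (∫ x : R2, (φ x) ^ 2) = m from rfl]
    field_simp
  have hnorm : L2norm ψ = 1 := by rw [L2norm, hL2, Real.sqrt_one]
  have hH0 : H0f σ ψ = m⁻¹ ^ 2 * H0f σ φ := by
    rw [H0f, H0f, hψ, grad_integral_scaled h.diff a hc,
      cube_integral_scaled φ a hc, hc2, inv_inv, hadef]
    have : m ≠ 0 := hm.ne'
    field_simp
  have hmem : H0f σ ψ ∈ sphereVals σ := ⟨ψ, hψ1, hnorm, rfl⟩
  have hle : sInf (sphereVals σ) ≤ H0f σ ψ := csInf_le hbdd hmem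
  have hA0 : -(A0 σ) ≤ m⁻¹ ^ 2 * H0f σ φ := by
    rw [A0, neg_neg]; rw [hH0] at hle; exact hle
  have hm2 : 0 < m ^ 2 := by positivity
  calc -(A0 σ) * m ^ 2 ≤ (m⁻¹ ^ 2 * H0f σ φ) * m ^ 2 := by
        exact mul_le_mul_of_nonneg_right hA0 hm2.le
    _ = H0f σ φ := by field_simp

/-- Supercritical taming A > A₀: the grand canonical Hamiltonian H_{ℝ²} has φ = 0 as its
unique minimizer over H¹(ℝ²): the infimum is 0, it is attained at 0, and H_{ℝ²}(φ) > 0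
for every φ ∈ H¹(ℝ²) with φ ≠ 0 (as an element of H¹, i.e. not a.e. zero). -/
theorem statement_8 (σ A : ℝ) (hσ : σ ≠ 0)
    (hne : (sphereVals σ).Nonempty) (hbdd : BddBelow (sphereVals σ)) (hpos : 0 < A0 σ)
    (hA : A0 σ < A) :
    sInf {y | ∃ φ : R2 → ℝ, InH1 φ ∧ y = HR2 σ A φ} = 0 ∧
    HR2 σ A (fun _ => 0) = 0 ∧
    (∀ φ : R2 → ℝ, InH1 φ → ¬ aeZero φ → 0 < HR2 σ A φ) := by
  have hf0 : fderiv ℝ (fun _ : R2 => (0:ℝ)) = fun _ => 0 := by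
    funext x; exact fderiv_const_apply 0
  have hzero : HR2 σ A (fun _ : R2 => 0) = 0 := by
    simp [HR2, H0f, gradL2sq, hf0]
  have hInH1zero : InH1 (fun _ : R2 => (0:ℝ)) := by
    refine ⟨differentiable_const 0, ?_, ?_, ?_⟩
    · exact MemLp.zero'
    · have : (fun x : R2 => ‖fderiv ℝ (fun _ : R2 => (0:ℝ)) x‖) = fun _ => (0:ℝ) := by
        funext x; rw [congrFun hf0 x]; simp
      rw [this]; exact MemLp.zero'
    · exact MemLp.zero'
  have hposφ : ∀ φ : R2 → ℝ, InH1 φ → ¬ aeZero φ → 0 < HR2 σ A φ := by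
    intro φ h hz
    have hm := L2sq_pos h hz
    have hlow := H0_lower hbdd h hm
    calc (0:ℝ) < (A - A0 σ) * (L2sq φ) ^ 2 :=
          mul_pos (sub_pos.mpr hA) (pow_pos hm 2)
      _ = -(A0 σ) * (L2sq φ) ^ 2 + A * (L2sq φ) ^ 2 := by ring
      _ ≤ H0f σ φ + A * (L2sq φ) ^ 2 := add_le_add_left hlow _
      _ = HR2 σ A φ := rfl
  have hmemS : (0:ℝ) ∈ {y | ∃ φ : R2 → ℝ, InH1 φ ∧ y = HR2 σ A φ} :=
    ⟨fun _ => 0, hInH1zero, hzero.symm⟩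
  have hlb : ∀ y ∈ {y | ∃ φ : R2 → ℝ, InH1 φ ∧ y = HR2 σ A φ}, (0:ℝ) ≤ y := by
    rintro y ⟨φ, hφ, rfl⟩
    by_cases hz : aeZero φ
    · have hφ0 : φ = fun _ => 0 :=
        (hφ.diff.continuous.ae_eq_iff_eq volume continuous_const).mp hz
      rw [hφ0, hzero]
    · exact (hposφ φ hφ hz).le
  exact ⟨le_antisymm (csInf_le ⟨0, hlb⟩ hmemS) (le_csInf ⟨0, hmemS⟩ hlb), hzero, hposφ⟩
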